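/- Let q_1, q_2, q_3 ∈ ℝ³ be defined by q_1 = (p_{1,2} + p_{1,3})/2, q_2 = (√6 − 2)p_{1,3} + ((3 − √6)/2)p_{2,3} + ((3 − √6)/2)p_4, q_3 = (√6 − 2)p_{1,2} + ((3 − √6)/2)p_{2,3} + ((3 − √6)/2)p_4, where p_{i,j} = (p_i + p_j)/2, p_1, p_2, p_3 are the vertices of an equilateral triangle of side length 1 in the plane z = 0 centered at the origin, and p_4 is the apex of the regular tetrahedron on the middle triangle of the subdivision (the unique point above the origin with ‖p_4 − p_{i,j}‖ appropriate). Then q_1, q_2, q_3 form an equilateral triangle of side length (√6 − 2)/2. -/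

import Mathlib

open Real

noncomputable def vec3 (a b c : ℝ) : EuclideanSpace ℝ (Fin 3) :=
  (EuclideanSpace.equiv (Fin 3) ℝ).symm ![a, b, c]

lemma vec3_apply (a b c : ℝ) (i : Fin 3) : vec3 a b c i = ![a, b, c] i := rfl

lemma vec3_smul (r a b c : ℝ) : r • vec3 a b c = vec3 (r * a) (r * b) (r * c) := by
  ext i; fin_cases i <;> rfl

lemma vec3_add (a b c d e f : ℝ) :
    vec3 a b c + vec3 d e f = vec3 (a + d) (b + e) (c + f) := by
  ext i; fin_cases i <;> rfl

lemma vec3_sub (a b c d e f : ℝ) :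
    vec3 a b c - vec3 d e f = vec3 (a - d) (b - e) (c - f) := by
  ext i; fin_cases i <;> rfl

lemma vec3_congr {a b c a' b' c' : ℝ} (h1 : a = a') (h2 : b = b') (h3 : c = c') :
    vec3 a b c = vec3 a' b' c' := by rw [h1, h2, h3]

lemma norm_vec3_eq (a b c L : ℝ) (hL : 0 ≤ L) (h : a ^ 2 + b ^ 2 + c ^ 2 = L ^ 2) :
    ‖vec3 a b c‖ = L := by
  rw [EuclideanSpace.norm_eq]
  simp only [vec3_apply, Fin.sum_univ_three, Matrix.cons_val_zero, Matrix.cons_val_one,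
    Matrix.head_cons, Matrix.cons_val_two, Matrix.tail_cons, Real.norm_eq_abs, sq_abs]
  rw [h, Real.sqrt_sq hL]

set_option maxHeartbeats 1000000 in
/-- The constraint points `q₁, q₂, q₃` of Case 3a form an equilateral triangle
of side length `(√6 − 2)/2`. -/
theorem case3a_constraints_equilateral :
    let p₁ : EuclideanSpace ℝ (Fin 3) :=
      (Real.sqrt 3 / 3) • vec3 (Real.cos 0) (Real.sin 0) 0
    let p₂ : EuclideanSpace ℝ (Fin 3) :=
      (Real.sqrt 3 / 3) • vec3 (Real.cos (2 * π / 3)) (Real.sin (2 * π / 3)) 0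
    let p₃ : EuclideanSpace ℝ (Fin 3) :=
      (Real.sqrt 3 / 3) • vec3 (Real.cos (4 * π / 3)) (Real.sin (4 * π / 3)) 0
    let p₄ : EuclideanSpace ℝ (Fin 3) := vec3 0 0 (Real.sqrt 6 / 6)
    let p₁₂ : EuclideanSpace ℝ (Fin 3) := (1 / 2 : ℝ) • (p₁ + p₂)
    let p₁₃ : EuclideanSpace ℝ (Fin 3) := (1 / 2 : ℝ) • (p₁ + p₃)
    let p₂₃ : EuclideanSpace ℝ (Fin 3) := (1 / 2 : ℝ) • (p₂ + p₃)
    let q₁ : EuclideanSpace ℝ (Fin 3) := (1 / 2 : ℝ) • (p₁₂ + p₁₃)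
    let q₂ : EuclideanSpace ℝ (Fin 3) :=
      (Real.sqrt 6 - 2) • p₁₃ + ((3 - Real.sqrt 6) / 2) • p₂₃ +
        ((3 - Real.sqrt 6) / 2) • p₄
    let q₃ : EuclideanSpace ℝ (Fin 3) :=
      (Real.sqrt 6 - 2) • p₁₂ + ((3 - Real.sqrt 6) / 2) • p₂₃ +
        ((3 - Real.sqrt 6) / 2) • p₄
    ‖q₁ - q₂‖ = (Real.sqrt 6 - 2) / 2 ∧ ‖q₂ - q₃‖ = (Real.sqrt 6 - 2) / 2 ∧
      ‖q₁ - q₃‖ = (Real.sqrt 6 - 2) / 2 := by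
  intro p₁ p₂ p₃ p₄ p₁₂ p₁₃ p₂₃ q₁ q₂ q₃
  have hc2 : Real.cos (2 * π / 3) = -(1 / 2) := by
    rw [show (2 * π / 3 : ℝ) = π - π / 3 by ring, Real.cos_pi_sub, Real.cos_pi_div_three]
  have hs2 : Real.sin (2 * π / 3) = Real.sqrt 3 / 2 := by
    rw [show (2 * π / 3 : ℝ) = π - π / 3 by ring, Real.sin_pi_sub, Real.sin_pi_div_three]
  have hc4 : Real.cos (4 * π / 3) = -(1 / 2) := by
    rw [show (4 * π / 3 : ℝ) = π / 3 + π by ring, Real.cos_add_pi, Real.cos_pi_div_three]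
  have hs4 : Real.sin (4 * π / 3) = -(Real.sqrt 3 / 2) := by
    rw [show (4 * π / 3 : ℝ) = π / 3 + π by ring, Real.sin_add_pi, Real.sin_pi_div_three]
  have h3 : Real.sqrt 3 ^ 2 = 3 := Real.sq_sqrt (by norm_num)
  have h6 : Real.sqrt 6 ^ 2 = 6 := Real.sq_sqrt (by norm_num)
  have h2 : Real.sqrt 2 ^ 2 = 2 := Real.sq_sqrt (by norm_num)
  have h32 : Real.sqrt 3 * Real.sqrt 2 = Real.sqrt 6 := by
    rw [← Real.sqrt_mul (by norm_num : (0:ℝ) ≤ 3)]; norm_num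
  have h9 : Real.sqrt 9 = 3 := by
    rw [show (9:ℝ) = 3 ^ 2 by norm_num, Real.sqrt_sq (by norm_num : (0:ℝ) ≤ 3)]
  have h36 : Real.sqrt 3 * Real.sqrt 6 = 3 * Real.sqrt 2 := by
    rw [← Real.sqrt_mul (by norm_num : (0:ℝ) ≤ 3),
      show (3 * 6 : ℝ) = 9 * 2 by norm_num,
      Real.sqrt_mul (by norm_num : (0:ℝ) ≤ 9), h9]
  have h6ge : (2:ℝ) ≤ Real.sqrt 6 := by nlinarith [h6, Real.sqrt_nonneg 6]
  have hL : (0:ℝ) ≤ (Real.sqrt 6 - 2) / 2 := by linarith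
  have hq1 : q₁ = vec3 (Real.sqrt 3 / 12) 0 0 := by
    simp only [q₁, p₁₂, p₁₃, p₁, p₂, p₃, Real.cos_zero, Real.sin_zero, hc2, hs2, hc4, hs4,
      vec3_smul, vec3_add]
    exact vec3_congr (by ring) (by linarith [h3]) (by ring)
  have hq2 : q₂ = vec3 ((6 * Real.sqrt 2 - 5 * Real.sqrt 3) / 12)
      (-((Real.sqrt 6 - 2) / 4)) ((Real.sqrt 6 - 2) / 4) := by
    simp only [q₂, p₁₃, p₂₃, p₁, p₂, p₃, p₄, Real.cos_zero, Real.sin_zero, hc2, hs2, hc4, hs4,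
      vec3_smul, vec3_add]
    exact vec3_congr (by linarith [h36]) (by nlinarith [h3]) (by linarith [h6])
  have hq3 : q₃ = vec3 ((6 * Real.sqrt 2 - 5 * Real.sqrt 3) / 12)
      ((Real.sqrt 6 - 2) / 4) ((Real.sqrt 6 - 2) / 4) := by
    simp only [q₃, p₁₂, p₂₃, p₁, p₂, p₃, p₄, Real.cos_zero, Real.sin_zero, hc2, hs2, hc4, hs4,
      vec3_smul, vec3_add]
    exact vec3_congr (by linarith [h36]) (by nlinarith [h3]) (by linarith [h6])
  refine ⟨?_, ?_, ?_⟩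
  · rw [hq1, hq2, vec3_sub]
    apply norm_vec3_eq _ _ _ _ hL
    nlinarith [h3, h2, h6, h32]
  · rw [hq2, hq3, vec3_sub]
    apply norm_vec3_eq _ _ _ _ hL
    ring
  · rw [hq1, hq3, vec3_sub]
    apply norm_vec3_eq _ _ _ _ hL
    nlinarith [h3, h2, h6, h32]
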